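/- Let (θ_i, θ*_i, i=0..d; φ_j, φ'_j, j=1..d) be a parameter array over a field K with d ≥ 1. Then (θ_i - θ_{d-i})/(θ_0 - θ_d) = (θ*_i - θ*_{d-i})/(θ*_0 - θ*_d) for 0 ≤ i ≤ d. -/
import Mathlib


open Finset

/-- A parameter array of diameter `d` over `K`:
scalars `θ 0,…,θ d`, `θs 0,…,θs d`, `φ 1,…,φ d`, `φp 1,…,φp d`
satisfying conditions (i)–(v) of the classification theorem. -/
def IsParameterArray (K : Type*) [Field K] (d : ℕ) (θ θs φ φp : ℕ → K) : Prop :=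
  (∀ i, 1 ≤ i → i ≤ d → φ i ≠ 0 ∧ φp i ≠ 0) ∧
  (∀ i j, i ≤ d → j ≤ d → i ≠ j → θ i ≠ θ j ∧ θs i ≠ θs j) ∧
  (∀ i, 1 ≤ i → i ≤ d →
    φ i = φp 1 * (∑ h ∈ Finset.range i, (θ h - θ (d - h)) / (θ 0 - θ d))
      + (θs i - θs 0) * (θ (i - 1) - θ d)) ∧
  (∀ i, 1 ≤ i → i ≤ d →
    φp i = φ 1 * (∑ h ∈ Finset.range i, (θ h - θ (d - h)) / (θ 0 - θ d))
      + (θs i - θs 0) * (θ (d - i + 1) - θ 0)) ∧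
  (∃ β : K, ∀ i, 2 ≤ i → i + 1 ≤ d →
    (θ (i - 2) - θ (i + 1)) / (θ (i - 1) - θ i) = β ∧
    (θs (i - 2) - θs (i + 1)) / (θs (i - 1) - θs i) = β)

theorem parameter_array_ratio {K : Type*} [Field K] (d : ℕ) (hd : 1 ≤ d)
    (θ θs φ φp : ℕ → K) (h : IsParameterArray K d θ θs φ φp) :
    ∀ i, i ≤ d →
      (θ i - θ (d - i)) / (θ 0 - θ d) = (θs i - θs (d - i)) / (θs 0 - θs d) := by
  obtain ⟨-, hdist, -, -, β, hβ⟩ := h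
  -- the β-recurrence in multiplicative-free form
  have hrec : ∀ m, m + 3 ≤ d →
      (θ m - θ (m+3) = β * (θ (m+1) - θ (m+2)) ∧
       θs m - θs (m+3) = β * (θs (m+1) - θs (m+2))) := by
    intro m hm
    obtain ⟨e1, e2⟩ := hβ (m+2) (by omega) (by omega)
    have n1 : θ (m+1) - θ (m+2) ≠ 0 :=
      sub_ne_zero.mpr ((hdist (m+1) (m+2) (by omega) (by omega) (by omega)).1)
    have n2 : θs (m+1) - θs (m+2) ≠ 0 :=
      sub_ne_zero.mpr ((hdist (m+1) (m+2) (by omega) (by omega) (by omega)).2)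
    rw [show m + 2 - 2 = m from by omega, show m + 2 - 1 = m + 1 from by omega,
        show m + 2 + 1 = m + 3 from by omega] at e1 e2
    rw [div_eq_iff n1] at e1
    rw [div_eq_iff n2] at e2
    exact ⟨e1, e2⟩
  -- the quantity F m = θ m - (β-1) θ (m+1) + θ (m+2) is constant
  have hF : ∀ m, m + 2 ≤ d →
      (θ m - (β-1) * θ (m+1) + θ (m+2) = θ 0 - (β-1) * θ 1 + θ 2 ∧
       θs m - (β-1) * θs (m+1) + θs (m+2) = θs 0 - (β-1) * θs 1 + θs 2) := by
    intro m
    induction m with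
    | zero => intro _; exact ⟨rfl, rfl⟩
    | succ n ih =>
      intro hm
      obtain ⟨f1, f2⟩ := ih (by omega)
      obtain ⟨g1, g2⟩ := hrec n (by omega)
      exact ⟨by linear_combination f1 - g1, by linear_combination f2 - g2⟩
  -- recurrence for u i = θ i - θ (d-i)
  have hu : ∀ m, m + 2 ≤ d →
      ((θ m - θ (d - m)) + (θ (m+2) - θ (d - m - 2))
          = (β-1) * (θ (m+1) - θ (d - m - 1)) ∧
       (θs m - θs (d - m)) + (θs (m+2) - θs (d - m - 2))
          = (β-1) * (θs (m+1) - θs (d - m - 1))) := by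
    intro m hm
    obtain ⟨f1, f2⟩ := hF m hm
    obtain ⟨g1, g2⟩ := hF (d - m - 2) (by omega)
    rw [show d - m - 2 + 1 = d - m - 1 from by omega,
        show d - m - 2 + 2 = d - m from by omega] at g1 g2
    exact ⟨by linear_combination f1 - g1, by linear_combination f2 - g2⟩
  set a := (d - 1) / 2 with ha
  have hd2 : d = 2*a + 1 ∨ d = 2*a + 2 := by omega
  set W : ℕ → K := fun i =>
    (θ i - θ (d - i)) * (θs a - θs (d - a)) - (θs i - θs (d - i)) * (θ a - θ (d - a))
    with hW
  have hWrec : ∀ m, m + 2 ≤ d → W m + W (m+2) = (β-1) * W (m+1) := by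
    intro m hm
    obtain ⟨p1, p2⟩ := hu m hm
    simp only [hW]
    rw [show d - (m+2) = d - m - 2 from by omega,
        show d - (m+1) = d - m - 1 from by omega]
    linear_combination (θs a - θs (d-a)) * p1 - (θ a - θ (d-a)) * p2
  have hWa : W a = 0 := by simp only [hW]; ring
  have hWa1 : W (a+1) = 0 := by
    rcases hd2 with hdo | hde
    · simp only [hW]
      rw [show d - (a+1) = a from by omega, show d - a = a + 1 from by omega]
      ring
    · simp only [hW]
      rw [show d - (a+1) = a + 1 from by omega, show d - a = a + 2 from by omega]
      ring
  have hdown : ∀ j, W (a - j) = 0 ∧ W (a + 1 - j) = 0 := by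
    intro j
    induction j with
    | zero => exact ⟨hWa, hWa1⟩
    | succ n ih =>
      obtain ⟨q1, q2⟩ := ih
      have i3 : a + 1 - (n+1) = a - n := by omega
      refine ⟨?_, by rw [i3]; exact q1⟩
      by_cases hn : n < a
      · have hr := hWrec (a - (n+1)) (by omega)
        rw [show a - (n+1) + 1 = a - n from by omega,
            show a - (n+1) + 2 = a + 1 - n from by omega] at hr
        linear_combination hr + (β-1) * q1 - q2
      · rw [show a - (n+1) = a - n from by omega]; exact q1
  have hup : ∀ j, a + 1 + j ≤ d → W (a + j) = 0 ∧ W (a + 1 + j) = 0 := by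
    intro j
    induction j with
    | zero => intro _; exact ⟨hWa, hWa1⟩
    | succ n ih =>
      intro hj
      obtain ⟨q1, q2⟩ := ih (by omega)
      have hr := hWrec (a + n) (by omega)
      rw [show a + n + 1 = a + 1 + n from by omega,
          show a + n + 2 = a + 1 + (n+1) from by omega] at hr
      refine ⟨by rw [show a + (n+1) = a + 1 + n from by omega]; exact q2, ?_⟩
      linear_combination hr - q1 + (β-1) * q2
  have hWall : ∀ i, i ≤ d → W i = 0 := by
    intro i hi
    rcases le_or_gt i a with hia | hia
    · have := (hdown (a - i)).1
      rwa [show a - (a - i) = i from by omega] at this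
    · have := (hup (i - (a+1)) (by omega)).2
      rwa [show a + 1 + (i - (a+1)) = i from by omega] at this
  have h0 : θ 0 - θ d ≠ 0 :=
    sub_ne_zero.mpr ((hdist 0 d (by omega) (by omega) (by omega)).1)
  have h0s : θs 0 - θs d ≠ 0 :=
    sub_ne_zero.mpr ((hdist 0 d (by omega) (by omega) (by omega)).2)
  have hua : θ a - θ (d - a) ≠ 0 := by
    rcases hd2 with hdo | hde
    · rw [show d - a = a + 1 from by omega]
      exact sub_ne_zero.mpr ((hdist a (a+1) (by omega) (by omega) (by omega)).1)
    · rw [show d - a = a + 2 from by omega]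
      exact sub_ne_zero.mpr ((hdist a (a+2) (by omega) (by omega) (by omega)).1)
  intro i hi
  have h1 := hWall i hi
  have h2 := hWall 0 (by omega)
  simp only [hW] at h1 h2
  rw [Nat.sub_zero] at h2
  rw [div_eq_div_iff h0 h0s]
  apply mul_right_cancel₀ hua
  linear_combination (θ 0 - θ d) * h1 - (θ i - θ (d - i)) * h2
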